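/- arXiv:1003.0403 — 3 statements merged into one kernel-verified Lean document; each statement's English description precedes it below -/
import Mathlib

section
/- Let n ≥ 1 and let φ ∈ L^∞((0,∞)). Define, for x, y ∈ ℝ^n with x ≠ y, H^φ(x,y) = ∫_0^∞ φ(t) · ∂/∂t ( e^{-|x-y|^2/(4t)} / (4πt)^{n/2} ) dt. Then the integral converges absolutely and there exists a constant C > 0 (depending only on n and the L^∞ norm of φ) such that |H^φ(x,y)| ≤ C / |x-y|^n for all x ≠ y. -/
open Real MeasureTheory Set
open scoped ENNReal NNReal

lemma key_int (a p : ℝ) (k : ℕ) (ha : 0 < a) (hp : 1 < p) (hk : p ≤ k) :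
    IntegrableOn (fun s => Real.exp (-a / s) * s ^ (-p)) (Ioi (0 : ℝ)) ∧
    ∫ s in Ioi (0 : ℝ), Real.exp (-a / s) * s ^ (-p) ≤
      ((k.factorial : ℝ) / ((k : ℝ) - p + 1) + 1 / (p - 1)) * a ^ (1 - p) := by
  set g : ℝ → ℝ := fun s => Real.exp (-a / s) * s ^ (-p) with hg
  have hkp : (0 : ℝ) ≤ (k : ℝ) - p := by linarith
  have hgcont : ContinuousOn g (Ioi (0 : ℝ)) := by
    apply ContinuousOn.mul
    · exact (ContinuousOn.rexp (continuousOn_const.div continuousOn_id fun s hs => ne_of_gt hs))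
    · exact ContinuousOn.rpow_const continuousOn_id fun s hs => Or.inl (ne_of_gt hs)
  have hgnonneg : ∀ s ∈ Ioi (0 : ℝ), 0 ≤ g s := fun s hs =>
    mul_nonneg (Real.exp_pos _).le (Real.rpow_nonneg (le_of_lt hs) _)
  -- bound on Ioc 0 a
  have hbd1 : ∀ s ∈ Ioc (0 : ℝ) a, g s ≤ (k.factorial : ℝ) * a ^ (-(k : ℝ)) * s ^ ((k : ℝ) - p) := by
    intro s hs
    have hs0 : 0 < s := hs.1
    have hu : 0 < a / s := div_pos ha hs0
    have hexp : Real.exp (-a / s) ≤ (k.factorial : ℝ) * (s / a) ^ k := by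
      have h1 : (a / s) ^ k / (k.factorial : ℝ) ≤ Real.exp (a / s) :=
        Real.pow_div_factorial_le_exp _ hu.le k
      have h2 : (0 : ℝ) < (a / s) ^ k / (k.factorial : ℝ) := by positivity
      have h3 : (Real.exp (a / s))⁻¹ ≤ ((a / s) ^ k / (k.factorial : ℝ))⁻¹ :=
        inv_anti₀ h2 h1
      rw [neg_div, Real.exp_neg]
      refine h3.trans_eq ?_
      rw [div_pow]
      field_simp
      rw [div_pow]
      field_simp
    have heq : (k.factorial : ℝ) * (s / a) ^ k * s ^ (-p) =
        (k.factorial : ℝ) * a ^ (-(k : ℝ)) * s ^ ((k : ℝ) - p) := by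
      rw [sub_eq_add_neg, Real.rpow_add hs0, Real.rpow_neg ha.le, Real.rpow_natCast,
        Real.rpow_natCast, div_pow]
      ring
    calc g s ≤ (k.factorial : ℝ) * (s / a) ^ k * s ^ (-p) :=
          mul_le_mul_of_nonneg_right hexp (Real.rpow_nonneg hs0.le _)
      _ = _ := heq
  have hb1int : IntegrableOn (fun s : ℝ => (k.factorial : ℝ) * a ^ (-(k : ℝ)) * s ^ ((k : ℝ) - p))
      (Ioc (0 : ℝ) a) := by
    have := (intervalIntegral.intervalIntegrable_rpow' (a := 0) (b := a)
      (r := (k : ℝ) - p) (by linarith)).const_mul ((k.factorial : ℝ) * a ^ (-(k : ℝ)))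
    exact (intervalIntegrable_iff_integrableOn_Ioc_of_le ha.le).1 this
  have hg1int : IntegrableOn g (Ioc (0 : ℝ) a) := by
    refine hb1int.mono' ((hgcont.mono Ioc_subset_Ioi_self).aestronglyMeasurable measurableSet_Ioc) ?_
    refine (ae_restrict_iff' measurableSet_Ioc).2 (ae_of_all _ fun s hs => ?_)
    rw [Real.norm_eq_abs, abs_of_nonneg (hgnonneg s hs.1)]
    exact hbd1 s hs
  have hint1 : ∫ s in Ioc (0 : ℝ) a, g s ≤ ((k.factorial : ℝ) / ((k : ℝ) - p + 1)) * a ^ (1 - p) := by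
    have h1 := setIntegral_mono_on hg1int hb1int measurableSet_Ioc hbd1
    refine h1.trans ?_
    have hane : a ^ (-(k : ℝ)) * a ^ ((k : ℝ) - p + 1) = a ^ (1 - p) := by
      rw [← Real.rpow_add ha]; ring_nf
    have hval : (k.factorial : ℝ) * a ^ (-(k : ℝ)) *
        ((a ^ ((k : ℝ) - p + 1) - (0 : ℝ) ^ ((k : ℝ) - p + 1)) / ((k : ℝ) - p + 1)) =
        (k.factorial : ℝ) / ((k : ℝ) - p + 1) * a ^ (1 - p) := by
      rw [Real.zero_rpow (by linarith : (k : ℝ) - p + 1 ≠ 0), sub_zero]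
      calc (k.factorial : ℝ) * a ^ (-(k : ℝ)) * (a ^ ((k : ℝ) - p + 1) / ((k : ℝ) - p + 1))
          = (k.factorial : ℝ) / ((k : ℝ) - p + 1) *
            (a ^ (-(k : ℝ)) * a ^ ((k : ℝ) - p + 1)) := by ring
        _ = _ := by rw [hane]
    rw [integral_const_mul, ← intervalIntegral.integral_of_le ha.le,
      integral_rpow (Or.inl (by linarith)), hval]
  -- Ioi a part
  have hbd2 : ∀ s ∈ Ioi a, g s ≤ s ^ (-p) := by
    intro s hs
    have hs0 : 0 < s := ha.trans hs
    have : Real.exp (-a / s) ≤ 1 := by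
      rw [Real.exp_le_one_iff, neg_div]
      simp [le_of_lt (div_pos ha hs0)]
    calc g s ≤ 1 * s ^ (-p) :=
          mul_le_mul_of_nonneg_right this (Real.rpow_nonneg hs0.le _)
      _ = s ^ (-p) := one_mul _
  have hb2int : IntegrableOn (fun s : ℝ => s ^ (-p)) (Ioi a) :=
    integrableOn_Ioi_rpow_of_lt (by linarith) ha
  have hg2int : IntegrableOn g (Ioi a) := by
    refine hb2int.mono' ((hgcont.mono fun s hs => ha.trans hs).aestronglyMeasurable
      measurableSet_Ioi) ?_
    refine (ae_restrict_iff' measurableSet_Ioi).2 (ae_of_all _ fun s hs => ?_)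
    rw [Real.norm_eq_abs, abs_of_nonneg (hgnonneg s (ha.trans hs))]
    exact hbd2 s hs
  have hint2 : ∫ s in Ioi a, g s ≤ (1 / (p - 1)) * a ^ (1 - p) := by
    have h1 := setIntegral_mono_on hg2int hb2int measurableSet_Ioi hbd2
    refine h1.trans ?_
    rw [integral_Ioi_rpow_of_lt (by linarith) ha]
    have : -a ^ (-p + 1) / (-p + 1) = 1 / (p - 1) * a ^ (1 - p) := by
      rw [show -p + 1 = 1 - p by ring]
      field_simp [show p - 1 ≠ 0 by linarith]
      ring_nf
      field_simp [show (1:ℝ) - p ≠ 0 by linarith]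
      ring
    exact le_of_eq this
  -- combine
  have hsplit : Ioc (0 : ℝ) a ∪ Ioi a = Ioi (0 : ℝ) := Ioc_union_Ioi_eq_Ioi ha.le
  have hgint : IntegrableOn g (Ioi (0 : ℝ)) := by
    rw [← hsplit]; exact hg1int.union hg2int
  refine ⟨hgint, ?_⟩
  have : ∫ s in Ioi (0 : ℝ), g s = (∫ s in Ioc (0 : ℝ) a, g s) + ∫ s in Ioi a, g s := by
    rw [← hsplit, setIntegral_union (Ioc_disjoint_Ioi le_rfl) measurableSet_Ioi hg1int hg2int]
  rw [this, add_mul]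
  exact add_le_add hint1 hint2

lemma heat_hasDerivAt (n : ℕ) (b : ℝ) (π' : ℝ) (hπ : 0 < π') {s : ℝ} (hs : 0 < s) :
    HasDerivAt (fun s : ℝ => Real.exp (-b / (4 * s)) / (4 * π' * s) ^ ((n : ℝ) / 2))
      (Real.exp (-b / (4 * s)) / (4 * π' * s) ^ ((n : ℝ) / 2) *
        (b / (4 * s ^ 2) - (n : ℝ) / (2 * s))) s := by
  have h4πs : 0 < 4 * π' * s := by positivity
  have hu : HasDerivAt (fun s : ℝ => -b / (4 * s)) (b / (4 * s ^ 2)) s := by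
    have h1 : HasDerivAt (fun s : ℝ => s⁻¹) (-(s ^ 2)⁻¹) s := hasDerivAt_inv hs.ne'
    have h2 := h1.const_mul (-b / 4)
    have h3 : (fun s : ℝ => -b / (4 * s)) = fun s : ℝ => -b / 4 * s⁻¹ := by
      funext t; ring
    rw [h3]
    refine h2.congr_deriv ?_
    ring
  have he := hu.exp
  have hinner : HasDerivAt (fun s : ℝ => 4 * π' * s) (4 * π') s := by
    simpa using (hasDerivAt_id s).const_mul (4 * π')
  have hv := hinner.rpow_const (p := (n : ℝ) / 2) (Or.inl h4πs.ne')
  have hV : (0 : ℝ) < (4 * π' * s) ^ ((n : ℝ) / 2) := Real.rpow_pos_of_pos h4πs _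
  have hq := he.div hv hV.ne'
  have hsub : (4 * π' * s) ^ ((n : ℝ) / 2 - 1) =
      (4 * π' * s) ^ ((n : ℝ) / 2) / (4 * π' * s) := by
    rw [Real.rpow_sub h4πs, Real.rpow_one]
  refine hq.congr_deriv ?_
  rw [hsub]
  field_simp

/-- For `n ≥ 1` and `φ ∈ L^∞((0,∞))`, the kernel
`H^φ(x,y) = ∫_0^∞ φ(t) ∂/∂t (e^{-|x-y|²/(4t)}/(4πt)^{n/2}) dt` converges absolutely and
satisfies `|H^φ(x,y)| ≤ C/|x-y|^n` for `x ≠ y`. -/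
theorem laplace_type_euclidean_kernel_bound (n : ℕ) (hn : 1 ≤ n) (φ : ℝ → ℝ)
    (hφ : MemLp φ ⊤ (volume.restrict (Ioi (0 : ℝ)))) :
    ∃ C > (0 : ℝ), ∀ x y : EuclideanSpace ℝ (Fin n), x ≠ y →
      IntegrableOn
        (fun t => φ t * deriv (fun s : ℝ =>
          Real.exp (-‖x - y‖ ^ 2 / (4 * s)) / (4 * π * s) ^ ((n : ℝ) / 2)) t)
        (Ioi 0) ∧
      |∫ t in Ioi (0 : ℝ), φ t * deriv (fun s : ℝ =>
          Real.exp (-‖x - y‖ ^ 2 / (4 * s)) / (4 * π * s) ^ ((n : ℝ) / 2)) t| ≤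
        C / ‖x - y‖ ^ n := by
  have hn' : (1 : ℝ) ≤ (n : ℝ) := by exact_mod_cast hn
  set M : ℝ := (eLpNorm φ ⊤ (volume.restrict (Ioi (0 : ℝ)))).toReal with hMdef
  have hM0 : 0 ≤ M := ENNReal.toReal_nonneg
  have hMae : ∀ᵐ t ∂(volume.restrict (Ioi (0 : ℝ))), |φ t| ≤ M := by
    have h1 : ∀ᵐ t ∂(volume.restrict (Ioi (0 : ℝ))),
        (‖φ t‖₊ : ℝ≥0∞) ≤ eLpNormEssSup φ (volume.restrict (Ioi (0 : ℝ))) :=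
      ae_le_eLpNormEssSup
    have h2 : eLpNorm φ ⊤ (volume.restrict (Ioi (0 : ℝ)))
        = eLpNormEssSup φ (volume.restrict (Ioi (0 : ℝ))) := eLpNorm_exponent_top
    have h3 : eLpNormEssSup φ (volume.restrict (Ioi (0 : ℝ))) ≠ ⊤ := by
      rw [← h2]; exact hφ.2.ne
    filter_upwards [h1] with t ht
    have := ENNReal.toReal_mono h3 ht
    simpa [hMdef, h2, Real.norm_eq_abs] using this
  set p₁ : ℝ := (n : ℝ) / 2 + 2 with hp₁'
  set p₂ : ℝ := (n : ℝ) / 2 + 1 with hp₂'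
  have hp₁1 : 1 < p₁ := by rw [hp₁']; linarith
  have hp₂1 : 1 < p₂ := by rw [hp₂']; linarith
  have hk₁ : p₁ ≤ ((n + 2 : ℕ) : ℝ) := by rw [hp₁']; push_cast; linarith
  have hk₂ : p₂ ≤ ((n + 1 : ℕ) : ℝ) := by rw [hp₂']; push_cast; linarith
  set c : ℝ := (4 * π) ^ (-((n : ℝ) / 2)) with hc'
  have hcpos : 0 < c := Real.rpow_pos_of_pos (by positivity) _
  set K₁ : ℝ := ((n + 2 : ℕ).factorial : ℝ) / (((n + 2 : ℕ) : ℝ) - p₁ + 1) + 1 / (p₁ - 1)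
    with hK₁'
  set K₂ : ℝ := ((n + 1 : ℕ).factorial : ℝ) / (((n + 1 : ℕ) : ℝ) - p₂ + 1) + 1 / (p₂ - 1)
    with hK₂'
  have hK₁pos : 0 < K₁ := by
    have : K₁ = ((n + 2 : ℕ).factorial : ℝ) / ((n : ℝ) / 2 + 1) + 1 / ((n : ℝ) / 2 + 1) := by
      rw [hK₁', hp₁']; push_cast; ring
    rw [this]
    have hf : (0 : ℝ) < ((n + 2 : ℕ).factorial : ℝ) := by exact_mod_cast (n + 2).factorial_pos
    positivity
  have hK₂pos : 0 < K₂ := by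
    have : K₂ = ((n + 1 : ℕ).factorial : ℝ) / ((n : ℝ) / 2 + 1) + 1 / ((n : ℝ) / 2) := by
      rw [hK₂', hp₂']; push_cast; ring
    rw [this]
    have hf : (0 : ℝ) < ((n + 1 : ℕ).factorial : ℝ) := by exact_mod_cast (n + 1).factorial_pos
    have hn2 : (0 : ℝ) < (n : ℝ) / 2 := by linarith
    positivity
  set Q : ℝ := c * (K₁ + (n : ℝ) / 2 * K₂) with hQ'
  have hQpos : 0 < Q := by
    have : (0 : ℝ) ≤ (n : ℝ) / 2 * K₂ := by positivity
    rw [hQ']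
    have : 0 < K₁ + (n : ℝ) / 2 * K₂ := by positivity
    positivity
  refine ⟨(M * Q + 1) * 2 ^ n, by positivity, ?_⟩
  intro x y hxy
  have hr : 0 < ‖x - y‖ := by
    rw [norm_pos_iff]
    exact sub_ne_zero.mpr hxy
  set b : ℝ := ‖x - y‖ ^ 2 with hb'
  have hb : 0 < b := by rw [hb']; positivity
  set a : ℝ := b / 4 with ha'
  have ha : 0 < a := by rw [ha']; positivity
  set G : ℝ → ℝ := fun s =>
    c * (a * (Real.exp (-a / s) * s ^ (-p₁)) + (n : ℝ) / 2 * (Real.exp (-a / s) * s ^ (-p₂)))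
    with hG'
  obtain ⟨hI₁int, hI₁val⟩ := key_int a p₁ (n + 2) ha hp₁1 hk₁
  obtain ⟨hI₂int, hI₂val⟩ := key_int a p₂ (n + 1) ha hp₂1 hk₂
  rw [← hK₁'] at hI₁val
  rw [← hK₂'] at hI₂val
  have hGint : IntegrableOn G (Ioi (0 : ℝ)) :=
    (((hI₁int.const_mul a).add (hI₂int.const_mul ((n : ℝ) / 2))).const_mul c)
  -- pointwise bound on the derivative
  have hGb : ∀ t ∈ Ioi (0 : ℝ),
      |deriv (fun s : ℝ =>
        Real.exp (-b / (4 * s)) / (4 * π * s) ^ ((n : ℝ) / 2)) t| ≤ G t := by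
    intro t ht
    have ht0 : 0 < t := ht
    have hderiv := (heat_hasDerivAt n b π Real.pi_pos ht0).deriv
    rw [hderiv]
    have hFpos : 0 < Real.exp (-b / (4 * t)) / (4 * π * t) ^ ((n : ℝ) / 2) := by positivity
    rw [abs_mul, abs_of_pos hFpos]
    have hX : (0 : ℝ) ≤ b / (4 * t ^ 2) := by positivity
    have hY : (0 : ℝ) ≤ (n : ℝ) / (2 * t) := by positivity
    have habs : |b / (4 * t ^ 2) - (n : ℝ) / (2 * t)| ≤ b / (4 * t ^ 2) + (n : ℝ) / (2 * t) := by
      rw [abs_sub_le_iff]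
      constructor <;> linarith
    have hEV : Real.exp (-b / (4 * t)) / (4 * π * t) ^ ((n : ℝ) / 2)
        = Real.exp (-a / t) * (c * t ^ (-((n : ℝ) / 2))) := by
      rw [show -b / (4 * t) = -a / t by rw [ha']; ring]
      rw [show (4 : ℝ) * π * t = (4 * π) * t by ring,
        Real.mul_rpow (by positivity) ht0.le, hc',
        Real.rpow_neg (by positivity : (0:ℝ) ≤ 4 * π), Real.rpow_neg ht0.le]
      field_simp
    have hsplit1 : t ^ (-p₁) = t ^ (-((n : ℝ) / 2)) * (t ^ 2)⁻¹ := by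
      rw [show -p₁ = -((n : ℝ) / 2) + -(2 : ℝ) by rw [hp₁']; ring, Real.rpow_add ht0]
      congr 1
      rw [show (-(2:ℝ)) = -((2:ℕ):ℝ) by norm_num, Real.rpow_neg ht0.le, Real.rpow_natCast]
    have hsplit2 : t ^ (-p₂) = t ^ (-((n : ℝ) / 2)) * t⁻¹ := by
      rw [show -p₂ = -((n : ℝ) / 2) + -(1 : ℝ) by rw [hp₂']; ring, Real.rpow_add ht0,
        Real.rpow_neg_one]
    calc Real.exp (-b / (4 * t)) / (4 * π * t) ^ ((n : ℝ) / 2)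
          * |b / (4 * t ^ 2) - (n : ℝ) / (2 * t)|
        ≤ Real.exp (-b / (4 * t)) / (4 * π * t) ^ ((n : ℝ) / 2)
          * (b / (4 * t ^ 2) + (n : ℝ) / (2 * t)) :=
          mul_le_mul_of_nonneg_left habs hFpos.le
      _ = G t := by
          rw [hEV, hG']
          simp only []
          rw [hsplit1, hsplit2, show b = 4 * a by rw [ha']; ring]
          field_simp
  -- integral bound for G
  have hGval : ∫ t in Ioi (0 : ℝ), G t ≤ Q * (2 ^ n / ‖x - y‖ ^ n) := by
    have ea1 : a * a ^ (1 - p₁) = a ^ (-((n : ℝ) / 2)) := by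
      nth_rewrite 1 [← Real.rpow_one a]
      rw [← Real.rpow_add ha]
      congr 1
      rw [hp₁']; ring
    have ea2 : a ^ (1 - p₂) = a ^ (-((n : ℝ) / 2)) := by
      congr 1; rw [hp₂']; ring
    have ear : a ^ (-((n : ℝ) / 2)) = 2 ^ n / ‖x - y‖ ^ n := by
      have h2 : a ^ ((n : ℝ) / 2) = ‖x - y‖ ^ n / 2 ^ n := by
        rw [ha', hb']
        rw [Real.div_rpow (by positivity) (by norm_num : (0:ℝ) ≤ 4)]
        congr 1
        · rw [← Real.rpow_natCast (‖x - y‖) 2, ← Real.rpow_mul (norm_nonneg _),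
            show ((2:ℕ):ℝ) * ((n:ℝ)/2) = ((n:ℕ):ℝ) by push_cast; ring, Real.rpow_natCast]
        · rw [show (4:ℝ) = (2:ℝ)^(2:ℕ) by norm_num, ← Real.rpow_natCast (2:ℝ) 2,
            ← Real.rpow_mul (by norm_num : (0:ℝ) ≤ 2),
            show ((2:ℕ):ℝ) * ((n:ℝ)/2) = ((n:ℕ):ℝ) by push_cast; ring, Real.rpow_natCast]
      rw [Real.rpow_neg ha.le, h2, inv_div]
    calc ∫ t in Ioi (0:ℝ), G t
        = c * (a * (∫ t in Ioi (0:ℝ), Real.exp (-a/t) * t ^ (-p₁))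
            + (n:ℝ)/2 * (∫ t in Ioi (0:ℝ), Real.exp (-a/t) * t ^ (-p₂))) := by
          simp only [hG']
          rw [integral_const_mul, integral_add (hI₁int.const_mul a)
            (hI₂int.const_mul ((n:ℝ)/2)), integral_const_mul, integral_const_mul]
      _ ≤ c * (a * (K₁ * a ^ (1 - p₁)) + (n:ℝ)/2 * (K₂ * a ^ (1 - p₂))) := by
          refine mul_le_mul_of_nonneg_left (add_le_add ?_ ?_) hcpos.le
          · exact mul_le_mul_of_nonneg_left hI₁val ha.le
          · exact mul_le_mul_of_nonneg_left hI₂val (by positivity)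
      _ = c * (K₁ * (a * a ^ (1 - p₁)) + (n:ℝ)/2 * (K₂ * a ^ (1 - p₂))) := by ring
      _ = Q * (2 ^ n / ‖x - y‖ ^ n) := by rw [ea1, ea2, ear, hQ']; ring
  -- measurability and domination
  have hmeas : AEStronglyMeasurable
      (fun t => φ t * deriv (fun s : ℝ =>
        Real.exp (-b / (4 * s)) / (4 * π * s) ^ ((n : ℝ) / 2)) t)
      (volume.restrict (Ioi (0:ℝ))) :=
    hφ.1.mul ((stronglyMeasurable_deriv _).aestronglyMeasurable)
  have hbd : ∀ᵐ t ∂(volume.restrict (Ioi (0:ℝ))),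
      ‖φ t * deriv (fun s : ℝ =>
        Real.exp (-b / (4 * s)) / (4 * π * s) ^ ((n : ℝ) / 2)) t‖ ≤ M * G t := by
    filter_upwards [hMae, ae_restrict_mem measurableSet_Ioi] with t h₁ h₂
    rw [Real.norm_eq_abs, abs_mul]
    exact mul_le_mul h₁ (hGb t h₂) (abs_nonneg _) hM0
  have hint : Integrable (fun t => φ t * deriv (fun s : ℝ =>
      Real.exp (-b / (4 * s)) / (4 * π * s) ^ ((n : ℝ) / 2)) t)
      (volume.restrict (Ioi (0:ℝ))) :=
    (hGint.const_mul M).mono' hmeas hbd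
  refine ⟨hint, ?_⟩
  calc |∫ t in Ioi (0:ℝ), φ t * deriv (fun s : ℝ =>
          Real.exp (-b / (4 * s)) / (4 * π * s) ^ ((n : ℝ) / 2)) t|
      ≤ ∫ t in Ioi (0:ℝ), ‖φ t * deriv (fun s : ℝ =>
          Real.exp (-b / (4 * s)) / (4 * π * s) ^ ((n : ℝ) / 2)) t‖ := by
        rw [← Real.norm_eq_abs]
        exact norm_integral_le_integral_norm _
    _ ≤ ∫ t in Ioi (0:ℝ), M * G t :=
        integral_mono_ae hint.norm (hGint.const_mul M) hbd
    _ = M * ∫ t in Ioi (0:ℝ), G t := integral_const_mul _ _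
    _ ≤ M * (Q * (2 ^ n / ‖x - y‖ ^ n)) := mul_le_mul_of_nonneg_left hGval hM0
    _ ≤ (M * Q + 1) * 2 ^ n / ‖x - y‖ ^ n := by
        rw [show M * (Q * (2 ^ n / ‖x - y‖ ^ n)) = M * Q * 2 ^ n / ‖x - y‖ ^ n by ring]
        gcongr
        linarith
end

section
/- Let k ≥ 1 and let β_1, …, β_k ∈ ℝ. The operator Z(g)(x) = ∏_{j=1}^k x_j^{-2β_j - 1} ∫_{x_1/2}^{2x_1} ⋯ ∫_{x_k/2}^{2x_k} g(y) ∏_{j=1}^k y_j^{2β_j} dy, x ∈ (0,∞)^k, is bounded from L^p((0,∞)^k, μ_β) into itself for every 1 ≤ p < ∞. -/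
open Real MeasureTheory Set intervalIntegral
open scoped ENNReal

/-- The measure on `(0,∞)^k` with density `∏ x_j^{2β_j}` w.r.t. Lebesgue measure. -/
noncomputable def muBeta {k : ℕ} (β : Fin k → ℝ) : Measure (Fin k → ℝ) :=
  ((volume : Measure (Fin k → ℝ)).restrict {x | ∀ j, 0 < x j}).withDensity
    (fun x => ENNReal.ofReal (∏ j, x j ^ (2 * β j)))

section Aux

/-! ### generic auxiliary lemmas -/

theorem lint_fin_prod {n : ℕ} (f : Fin n → ℝ → ℝ≥0∞) (hf : ∀ i, Measurable (f i)) :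
    ∫⁻ x : Fin n → ℝ, ∏ i, f i (x i) = ∏ i, ∫⁻ t, f i t := by
  induction n with
  | zero => simp [lintegral_const, volume_pi]
  | succ n ih =>
    have h := ((MeasureTheory.measurePreserving_piFinSuccAbove
      (fun _ : Fin (n+1) => (volume : Measure ℝ)) 0).symm)
    have hm : Measurable fun x : Fin (n+1) → ℝ => ∏ i, f i (x i) :=
      Finset.measurable_prod _ fun i _ => (hf i).comp (measurable_pi_apply i)
    rw [volume_pi, ← h.lintegral_comp hm]
    simp_rw [MeasurableEquiv.piFinSuccAbove_symm_apply, Fin.insertNthEquiv, Equiv.coe_fn_mk,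
      Fin.prod_univ_succ, Fin.insertNth_apply_same, ← Fin.zero_succAbove,
      Fin.insertNth_apply_succAbove]
    rw [lintegral_prod_mul (f := fun t => f 0 t)
      (g := fun y : Fin n → ℝ => ∏ x, f (Fin.succAbove 0 x) (y x)) (hf 0).aemeasurable
      (Finset.measurable_prod _ fun i _ => (hf _).comp (measurable_pi_apply i)).aemeasurable]
    rw [← volume_pi, ih (fun i => f (Fin.succAbove 0 i)) (fun i => hf _)]

theorem setLint_pi_prod {n : ℕ} (f : Fin n → ℝ → ℝ≥0∞) (hf : ∀ j, Measurable (f j))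
    (S : Fin n → Set ℝ) (hS : ∀ j, MeasurableSet (S j)) :
    ∫⁻ y in Set.pi univ S, ∏ j, f j (y j) ∂volume = ∏ j, ∫⁻ t in S j, f j t := by
  rw [← lintegral_indicator (MeasurableSet.univ_pi hS)]
  have key : ∀ y : Fin n → ℝ, (Set.pi univ S).indicator (fun y => ∏ j, f j (y j)) y
      = ∏ j, (S j).indicator (f j) (y j) := by
    intro y
    by_cases h : y ∈ Set.pi univ S
    · rw [indicator_of_mem h]
      exact Finset.prod_congr rfl fun j _ => (indicator_of_mem (h j (mem_univ j)) _).symm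
    · rw [indicator_of_notMem h]
      rw [mem_univ_pi] at h; push_neg at h; obtain ⟨j, hj⟩ := h
      exact (Finset.prod_eq_zero (Finset.mem_univ j) (indicator_of_notMem hj _)).symm
  rw [lintegral_congr key, lint_fin_prod _ (fun j => (hf j).indicator (hS j))]
  exact Finset.prod_congr rfl fun j _ => (lintegral_indicator (hS j) _)

noncomputable def Cr (b : ℝ) : ℝ := ∫ t in (1/2 : ℝ)..2, t ^ b

lemma rpow_intInt (b : ℝ) {a c : ℝ} (ha : 0 < a) (hc : a ≤ c) :
    IntervalIntegrable (fun t : ℝ => t ^ b) volume a c := by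
  apply ContinuousOn.intervalIntegrable
  apply ContinuousOn.rpow_const continuousOn_id
  intro t ht
  rw [uIcc_of_le hc] at ht
  exact Or.inl (ne_of_gt (lt_of_lt_of_le ha ht.1))

lemma Cr_pos (b : ℝ) : 0 < Cr b := by
  apply intervalIntegral_pos_of_pos_on (rpow_intInt b (by norm_num) (by norm_num))
  · intro t ht
    exact Real.rpow_pos_of_pos (lt_trans (by norm_num) ht.1) b
  · norm_num

lemma scale_int (b : ℝ) {x : ℝ} (hx : 0 < x) :
    ∫ t in (x/2)..(2*x), t ^ b = x ^ (b+1) * Cr b := by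
  have h0 : (0:ℝ) ∉ Set.uIcc (x/2) (2*x) := by
    rw [uIcc_of_le (by linarith)]
    intro h
    exact absurd h.1 (by simp; linarith)
  have h0' : (0:ℝ) ∉ Set.uIcc ((1:ℝ)/2) 2 := by
    rw [uIcc_of_le (by norm_num)]
    intro h
    have := h.1; norm_num at this
  rcases eq_or_ne b (-1) with hb | hb
  · subst hb
    simp_rw [Real.rpow_neg_one]
    rw [integral_inv h0, Cr]
    simp_rw [Real.rpow_neg_one]
    rw [integral_inv h0']
    rw [neg_add_cancel, Real.rpow_zero, one_mul]
    congr 1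
    field_simp
  · rw [integral_rpow (Or.inr ⟨hb, h0⟩), Cr, integral_rpow (Or.inr ⟨hb, h0'⟩)]
    have hb1 : b + 1 ≠ 0 := by intro h; exact hb (by linarith)
    rw [div_eq_iff hb1] at *
    field_simp
    rw [Real.mul_rpow (by norm_num) hx.le, show x/2 = x * (1/2) by ring,
      Real.mul_rpow hx.le (by norm_num)]
    ring

lemma lint_Ioo (b : ℝ) {x : ℝ} (hx : 0 < x) :
    ∫⁻ t in Ioo (x/2) (2*x), ENNReal.ofReal (t ^ b) = ENNReal.ofReal (x ^ (b+1) * Cr b) := by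
  have hle : x/2 ≤ 2*x := by linarith
  have hInt : IntegrableOn (fun t : ℝ => t ^ b) (Ioo (x/2) (2*x)) volume := by
    have := (rpow_intInt b (by linarith : (0:ℝ) < x/2) hle).1
    exact this.mono_set Ioo_subset_Ioc_self
  rw [← MeasureTheory.ofReal_integral_eq_lintegral_ofReal hInt ?nn]
  case nn =>
    filter_upwards [ae_restrict_mem measurableSet_Ioo] with t ht
    exact Real.rpow_nonneg (by linarith [ht.1] : (0:ℝ) ≤ t) b
  rw [← MeasureTheory.integral_Ioc_eq_integral_Ioo, ← intervalIntegral.integral_of_le hle,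
    scale_int b hx]

lemma hoelder_step {α : Type*} [MeasurableSpace α] {μ : Measure α} {K G : α → ℝ≥0∞}
    (hK : AEMeasurable K μ) (hG : AEMeasurable G μ) {pr : ℝ} (hpr : 1 ≤ pr) {A : ℝ≥0∞}
    (hA : ∫⁻ y, K y ∂μ ≤ A) :
    (∫⁻ y, K y * G y ∂μ) ^ pr ≤ A ^ (pr - 1) * ∫⁻ y, K y * G y ^ pr ∂μ := by
  rcases eq_or_lt_of_le hpr with h1 | h1
  · simp only [← h1, ENNReal.rpow_one, sub_self, ENNReal.rpow_zero, one_mul]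
    exact le_refl _
  · set q := Real.conjExponent pr with hq
    have hpq : pr.HolderConjugate q := Real.HolderConjugate.conjExponent h1
    have hqpr : q.HolderConjugate pr := hpq.symm
    have hprne : pr ≠ 0 := hpq.ne_zero
    have hqne : q ≠ 0 := hqpr.ne_zero
    have key : ∫⁻ y, K y * G y ∂μ ≤
        (∫⁻ y, K y ∂μ) ^ (1/q) * (∫⁻ y, K y * G y ^ pr ∂μ) ^ (1/pr) := by
      have h2 : ∀ y, K y * G y = (K y ^ (1/q)) * (K y ^ (1/pr) * G y) := by
        intro y
        rw [← mul_assoc, ← ENNReal.rpow_add_of_nonneg _ _ hqpr.one_div_nonneg hpq.one_div_nonneg]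
        rw [one_div, one_div, add_comm, hpq.inv_add_inv_eq_one, ENNReal.rpow_one]
      calc ∫⁻ y, K y * G y ∂μ
          = ∫⁻ y, ((fun y => K y ^ (1/q)) * fun y => (K y ^ (1/pr) * G y)) y ∂μ := by
            simp only [Pi.mul_apply]; exact lintegral_congr h2
        _ ≤ (∫⁻ y, (K y ^ (1/q)) ^ q ∂μ) ^ (1/q) * (∫⁻ y, (K y ^ (1/pr) * G y) ^ pr ∂μ) ^ (1/pr) :=
            ENNReal.lintegral_mul_le_Lp_mul_Lq μ hqpr (hK.pow_const _)
              ((hK.pow_const _).mul hG)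
        _ = (∫⁻ y, K y ∂μ) ^ (1/q) * (∫⁻ y, K y * G y ^ pr ∂μ) ^ (1/pr) := by
            congr 1
            · congr 1
              apply lintegral_congr fun y => ?_
              rw [← ENNReal.rpow_mul, one_div, inv_mul_cancel₀ hqne, ENNReal.rpow_one]
            · congr 1
              apply lintegral_congr fun y => ?_
              rw [ENNReal.mul_rpow_of_nonneg _ _ (by linarith : (0:ℝ) ≤ pr),
                ← ENNReal.rpow_mul, one_div, inv_mul_cancel₀ hprne, ENNReal.rpow_one]
    calc (∫⁻ y, K y * G y ∂μ) ^ pr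
        ≤ ((∫⁻ y, K y ∂μ) ^ (1/q) * (∫⁻ y, K y * G y ^ pr ∂μ) ^ (1/pr)) ^ pr :=
          ENNReal.rpow_le_rpow key (by linarith)
      _ = ((∫⁻ y, K y ∂μ) ^ (1/q)) ^ pr * (((∫⁻ y, K y * G y ^ pr ∂μ) ^ (1/pr)) ^ pr) :=
          ENNReal.mul_rpow_of_nonneg _ _ (by linarith)
      _ = (∫⁻ y, K y ∂μ) ^ (pr - 1) * ∫⁻ y, K y * G y ^ pr ∂μ := by
          rw [← ENNReal.rpow_mul, ← ENNReal.rpow_mul, one_div, one_div,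
            inv_mul_cancel₀ hprne, ENNReal.rpow_one]
          congr 2
          rw [hpq.conjugate_eq]
          field_simp
      _ ≤ A ^ (pr - 1) * ∫⁻ y, K y * G y ^ pr ∂μ :=
          mul_le_mul_left (ENNReal.rpow_le_rpow hA (by linarith)) _

/-! ### setup specific to the operator -/

def posSet (k : ℕ) : Set (Fin k → ℝ) := {x | ∀ j, 0 < x j}

def boxSet {k : ℕ} (x : Fin k → ℝ) : Set (Fin k → ℝ) := {y | ∀ j, x j / 2 < y j ∧ y j < 2 * x j}

noncomputable def wB {k : ℕ} (β : Fin k → ℝ) (x : Fin k → ℝ) : ℝ≥0∞ :=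
  ENNReal.ofReal (∏ j, x j ^ (2 * β j))

noncomputable def KK {k : ℕ} (β : Fin k → ℝ) (x y : Fin k → ℝ) : ℝ≥0∞ :=
  Set.indicator {p : (Fin k → ℝ) × (Fin k → ℝ) | ∀ j, p.1 j / 2 < p.2 j ∧ p.2 j < 2 * p.1 j}
    (fun p => ENNReal.ofReal (∏ j, p.1 j ^ (-(2 * β j) - 1))) (x, y)

variable {k : ℕ} (β : Fin k → ℝ)

lemma muBeta_eq : muBeta β =
    ((volume : Measure (Fin k → ℝ)).restrict (posSet k)).withDensity (wB β) := rfl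

lemma measurableSet_posSet : MeasurableSet (posSet k) := by
  have : posSet k = Set.pi univ (fun _ : Fin k => Ioi (0:ℝ)) := by
    ext x; simp [posSet, Set.mem_pi]
  rw [this]
  exact MeasurableSet.univ_pi fun _ => measurableSet_Ioi

lemma boxSet_eq_pi (x : Fin k → ℝ) :
    boxSet x = Set.pi univ (fun j => Ioo (x j / 2) (2 * x j)) := by
  ext y; simp [boxSet, Set.mem_pi]

lemma measurableSet_boxSet (x : Fin k → ℝ) : MeasurableSet (boxSet x) := by
  rw [boxSet_eq_pi]
  exact MeasurableSet.univ_pi fun _ => measurableSet_Ioo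

lemma boxSet_subset {x : Fin k → ℝ} (hx : ∀ j, 0 < x j) : boxSet x ⊆ posSet k := by
  intro y hy j
  have h1 := (hy j).1
  have h2 := hx j
  show (0:ℝ) < y j
  linarith

lemma measurable_prod_rpow (c : Fin k → ℝ) :
    Measurable fun x : Fin k → ℝ => ∏ j, x j ^ (c j) :=
  Finset.measurable_prod _ fun j _ => (measurable_pi_apply j).pow_const _

lemma measurable_wB : Measurable (wB β) :=
  (measurable_prod_rpow _).ennreal_ofReal

lemma measurableSet_SS : MeasurableSet
    {p : (Fin k → ℝ) × (Fin k → ℝ) | ∀ j, p.1 j / 2 < p.2 j ∧ p.2 j < 2 * p.1 j} := by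
  have : {p : (Fin k → ℝ) × (Fin k → ℝ) | ∀ j, p.1 j / 2 < p.2 j ∧ p.2 j < 2 * p.1 j}
      = ⋂ j, ({p : (Fin k → ℝ) × (Fin k → ℝ) | p.1 j / 2 < p.2 j}
        ∩ {p | p.2 j < 2 * p.1 j}) := by
    ext p; simp [forall_and, Set.mem_iInter]
  rw [this]
  refine MeasurableSet.iInter fun j => (MeasurableSet.inter ?_ ?_)
  · exact measurableSet_lt (by fun_prop) (by fun_prop)
  · exact measurableSet_lt (by fun_prop) (by fun_prop)

lemma measurable_KK : Measurable fun p : (Fin k → ℝ) × (Fin k → ℝ) => KK β p.1 p.2 :=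
  Measurable.indicator ((measurable_prod_rpow _).comp measurable_fst).ennreal_ofReal
    (measurableSet_SS)

lemma KK_eq_snd (x y : Fin k → ℝ) :
    KK β x y = (boxSet x).indicator
      (fun _ => ENNReal.ofReal (∏ j, x j ^ (-(2 * β j) - 1))) y := by
  by_cases h : y ∈ boxSet x
  · rw [KK, indicator_of_mem (by exact h), indicator_of_mem h]
  · rw [KK, indicator_of_notMem (by exact h), indicator_of_notMem h]

lemma KK_eq_fst (x y : Fin k → ℝ) :
    KK β x y = (boxSet y).indicator
      (fun x => ENNReal.ofReal (∏ j, x j ^ (-(2 * β j) - 1))) x := by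
  have hmem : (x, y) ∈ {p : (Fin k → ℝ) × (Fin k → ℝ) |
      ∀ j, p.1 j / 2 < p.2 j ∧ p.2 j < 2 * p.1 j} ↔ x ∈ boxSet y := by
    simp only [mem_setOf_eq, boxSet]
    constructor
    · intro h j; obtain ⟨h1, h2⟩ := h j; constructor <;> linarith
    · intro h j; obtain ⟨h1, h2⟩ := h j; constructor <;> linarith
  by_cases h : x ∈ boxSet y
  · rw [KK, indicator_of_mem (hmem.mpr h), indicator_of_mem h]
  · rw [KK, indicator_of_notMem (fun hc => h (hmem.mp hc)), indicator_of_notMem h]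

lemma muBeta_ae_pos : ∀ᵐ x ∂(muBeta β), ∀ j, 0 < x j := by
  rw [ae_iff, muBeta_eq]
  apply withDensity_absolutelyContinuous _ _
  rw [Measure.restrict_apply' measurableSet_posSet]
  convert measure_empty (μ := (volume : Measure (Fin k → ℝ)))
  ext x
  simp only [mem_inter_iff, mem_setOf_eq, posSet, mem_empty_iff_false, iff_false, not_and]
  intro h hx
  exact h hx

lemma restrict_muBeta_box {x : Fin k → ℝ} (hx : ∀ j, 0 < x j) :
    (muBeta β).restrict (boxSet x) =
      ((volume : Measure (Fin k → ℝ)).restrict (boxSet x)).withDensity (wB β) := by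
  rw [muBeta_eq, restrict_withDensity (measurableSet_boxSet x),
    Measure.restrict_restrict (measurableSet_boxSet x),
    inter_eq_left.mpr (boxSet_subset hx)]

/-- the `μ`-integral in `y` of the kernel -/
lemma lint_K_snd {x : Fin k → ℝ} (hx : ∀ j, 0 < x j) :
    ∫⁻ y, KK β x y ∂(muBeta β) = ∏ j, ENNReal.ofReal (Cr (2 * β j)) := by
  have hbox : ∫⁻ y in boxSet x, wB β y ∂volume
      = ∏ j, ENNReal.ofReal ((x j) ^ (2 * β j + 1) * Cr (2 * β j)) := by
    have hcongr : ∀ y ∈ boxSet x, wB β y = ∏ j, ENNReal.ofReal ((y j) ^ (2 * β j)) := by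
      intro y hy
      exact ENNReal.ofReal_prod_of_nonneg fun j _ =>
        Real.rpow_nonneg (by linarith [(hy j).1, hx j] : (0:ℝ) ≤ y j) _
    rw [setLIntegral_congr_fun (measurableSet_boxSet x) hcongr,
      boxSet_eq_pi,
      setLint_pi_prod (fun j t => ENNReal.ofReal (t ^ (2 * β j)))
        (fun j => (measurable_id.pow_const _).ennreal_ofReal) _
        (fun j => measurableSet_Ioo)]
    exact Finset.prod_congr rfl fun j _ => lint_Ioo (2 * β j) (hx j)
  calc ∫⁻ y, KK β x y ∂(muBeta β)
      = ∫⁻ y, (boxSet x).indicator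
          (fun _ => ENNReal.ofReal (∏ j, x j ^ (-(2 * β j) - 1))) y ∂(muBeta β) :=
        lintegral_congr fun y => KK_eq_snd β x y
    _ = ENNReal.ofReal (∏ j, x j ^ (-(2 * β j) - 1)) * (muBeta β) (boxSet x) := by
        rw [lintegral_indicator (measurableSet_boxSet x), setLIntegral_const]
    _ = ENNReal.ofReal (∏ j, x j ^ (-(2 * β j) - 1)) *
          ∫⁻ y in boxSet x, wB β y ∂volume := by
        congr 1
        rw [← MeasureTheory.Measure.restrict_apply_univ, restrict_muBeta_box β hx,
          withDensity_apply _ MeasurableSet.univ, Measure.restrict_restrict MeasurableSet.univ,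
          univ_inter]
    _ = ∏ j, ENNReal.ofReal (Cr (2 * β j)) := by
        rw [hbox, ENNReal.ofReal_prod_of_nonneg
          (fun j _ => Real.rpow_nonneg (hx j).le _), ← Finset.prod_mul_distrib]
        refine Finset.prod_congr rfl fun j _ => ?_
        rw [← ENNReal.ofReal_mul (Real.rpow_nonneg (hx j).le _), ← mul_assoc,
          ← Real.rpow_add (hx j),
          show -(2 * β j) - 1 + (2 * β j + 1) = 0 by ring, Real.rpow_zero, one_mul]
    
/-- the `μ`-integral in `x` of the kernel -/
lemma lint_K_fst {y : Fin k → ℝ} (hy : ∀ j, 0 < y j) :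
    ∫⁻ x, KK β x y ∂(muBeta β) = ∏ _j : Fin k, ENNReal.ofReal (Cr (-1)) := by
  calc ∫⁻ x, KK β x y ∂(muBeta β)
      = ∫⁻ x in boxSet y, ENNReal.ofReal (∏ j, x j ^ (-(2 * β j) - 1)) ∂(muBeta β) := by
        rw [← lintegral_indicator (measurableSet_boxSet y)]
        exact lintegral_congr fun x => KK_eq_fst β x y
    _ = ∫⁻ x in boxSet y, wB β x * ENNReal.ofReal (∏ j, x j ^ (-(2 * β j) - 1)) ∂volume := by
        rw [restrict_muBeta_box β hy,
          lintegral_withDensity_eq_lintegral_mul _ (measurable_wB β)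
            (measurable_prod_rpow _).ennreal_ofReal]
        rfl
    _ = ∫⁻ x in boxSet y, ∏ j, ENNReal.ofReal ((x j) ^ (-1 : ℝ)) ∂volume := by
        apply setLIntegral_congr_fun (measurableSet_boxSet y)
        intro x hxb
        have hxpos : ∀ j, 0 < x j := fun j => by linarith [(hxb j).1, hy j]
        have hnn : (0:ℝ) ≤ ∏ j, x j ^ (2 * β j) :=
          Finset.prod_nonneg fun j _ => Real.rpow_nonneg (hxpos j).le _
        beta_reduce
        rw [show wB β x = ENNReal.ofReal (∏ j, x j ^ (2 * β j)) from rfl,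
          ← ENNReal.ofReal_mul hnn, ← Finset.prod_mul_distrib,
          ENNReal.ofReal_prod_of_nonneg (fun j _ => mul_nonneg
            (Real.rpow_nonneg (hxpos j).le _) (Real.rpow_nonneg (hxpos j).le _))]
        refine Finset.prod_congr rfl fun j _ => ?_
        rw [← Real.rpow_add (hxpos j),
          show 2 * β j + (-(2 * β j) - 1) = -1 by ring]
    _ = ∏ _j : Fin k, ENNReal.ofReal (Cr (-1)) := by
        rw [boxSet_eq_pi, setLint_pi_prod (fun _ t => ENNReal.ofReal (t ^ (-1:ℝ)))
          (fun j => (measurable_id.pow_const _).ennreal_ofReal) _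
          (fun j => measurableSet_Ioo)]
        refine Finset.prod_congr rfl fun j _ => ?_
        rw [lint_Ioo (-1) (hy j), show (-1:ℝ) + 1 = 0 by ring, Real.rpow_zero, one_mul]

end Aux

/-- The local averaging operator
`Z g (x) = ∏ x_j^{-2β_j-1} ∫_{x_1/2}^{2x_1} ⋯ ∫_{x_k/2}^{2x_k} g(y) ∏ y_j^{2β_j} dy`
is bounded on `L^p(μ_β)` for every `1 ≤ p < ∞`. -/
theorem Zop_strong_type (k : ℕ) (hk : 1 ≤ k) (β : Fin k → ℝ)
    (p : ℝ≥0∞) (hp : 1 ≤ p) (hp' : p ≠ ⊤) :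
    ∃ C > (0 : ℝ), ∀ g : (Fin k → ℝ) → ℝ, MemLp g p (muBeta β) →
      eLpNorm (fun x =>
        (∏ j, x j ^ (-(2 * β j) - 1)) *
          ∫ y in {y : Fin k → ℝ | ∀ j, x j / 2 < y j ∧ y j < 2 * x j},
            g y * ∏ j, y j ^ (2 * β j)) p (muBeta β) ≤
        ENNReal.ofReal C * eLpNorm g p (muBeta β) := by
  haveI : SigmaFinite (muBeta β) := by unfold muBeta; infer_instance
  have hp0 : p ≠ 0 := (zero_lt_one.trans_le hp).ne'
  set pr := p.toReal with hprdef
  have hpr1 : 1 ≤ pr := by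
    have := ENNReal.toReal_mono hp' hp
    simpa using this
  have hprpos : 0 < pr := lt_of_lt_of_le zero_lt_one hpr1
  set C1 : ℝ≥0∞ := ∏ j, ENNReal.ofReal (Cr (2 * β j)) with hC1def
  set C2 : ℝ≥0∞ := ∏ _j : Fin k, ENNReal.ofReal (Cr (-1)) with hC2def
  have hC1 : C1 ≠ ∞ := by
    refine (ENNReal.prod_lt_top ?_).ne
    intro j _
    exact ENNReal.ofReal_lt_top
  have hC2 : C2 ≠ ∞ := by
    refine (ENNReal.prod_lt_top ?_).ne
    intro j _
    exact ENNReal.ofReal_lt_top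
  have hC1pow : C1 ^ (pr - 1) ≠ ∞ := ENNReal.rpow_ne_top_of_nonneg (by linarith) hC1
  set D : ℝ≥0∞ := (C1 ^ (pr - 1) * C2) ^ (1/pr) with hDdef
  have hD : D ≠ ∞ :=
    ENNReal.rpow_ne_top_of_nonneg (one_div_nonneg.mpr hprpos.le)
      (ENNReal.mul_ne_top hC1pow hC2)
  have hDC : D ≤ ENNReal.ofReal (D.toReal + 1) := by
    calc D = ENNReal.ofReal D.toReal := (ENNReal.ofReal_toReal hD).symm
      _ ≤ ENNReal.ofReal (D.toReal + 1) := ENNReal.ofReal_le_ofReal (by linarith)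
  refine ⟨D.toReal + 1, by positivity, ?_⟩
  intro g hg
  simp only [show ∀ x : Fin k → ℝ,
    {y | ∀ j, x j / 2 < y j ∧ y j < 2 * x j} = boxSet x from fun _ => rfl]
  -- pass to a measurable representative
  have hsm := hg.aestronglyMeasurable
  set g' := hsm.mk g with hg'def
  have hmg' : Measurable g' := hsm.stronglyMeasurable_mk.measurable
  have hae : g =ᵐ[muBeta β] g' := hsm.ae_eq_mk
  obtain ⟨M, hMsub, hMmeas, hM0⟩ :=
    exists_measurable_superset_of_null (ae_iff.mp hae)
  have hMvol : volume (M ∩ posSet k) = 0 := by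
    have h1 : muBeta β M = 0 := hM0
    rw [muBeta_eq, withDensity_apply _ hMmeas] at h1
    rw [Measure.restrict_restrict hMmeas] at h1
    have h2 := (lintegral_eq_zero_iff (measurable_wB β)).mp h1
    rw [Filter.EventuallyEq, ae_restrict_iff' (hMmeas.inter (measurableSet_posSet))] at h2
    rw [ae_iff] at h2
    apply measure_mono_null _ h2
    intro y hy
    simp only [mem_setOf_eq]
    intro himp
    have hw := himp hy
    have hpos : 0 < ∏ j, y j ^ (2 * β j) :=
      Finset.prod_pos fun j _ => Real.rpow_pos_of_pos (hy.2 j) _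
    have : wB β y ≠ 0 := by
      rw [show wB β y = ENNReal.ofReal (∏ j, y j ^ (2 * β j)) from rfl]
      simp [ENNReal.ofReal_eq_zero, not_le, hpos]
    exact this hw
  have hZae : (fun x => (∏ j, x j ^ (-(2*β j) - 1)) *
        ∫ y in boxSet x, g y * ∏ j, y j ^ (2*β j))
      =ᵐ[muBeta β] (fun x => (∏ j, x j ^ (-(2*β j) - 1)) *
        ∫ y in boxSet x, g' y * ∏ j, y j ^ (2*β j)) := by
    filter_upwards [muBeta_ae_pos β] with x hx
    congr 1
    apply MeasureTheory.integral_congr_ae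
    have hae2 : ∀ᵐ y ∂(volume.restrict (boxSet x)), g y = g' y := by
      rw [ae_restrict_iff' (measurableSet_boxSet x)]
      have h3 : ∀ᵐ y ∂(volume : Measure (Fin k → ℝ)), y ∉ M ∩ posSet k :=
        measure_eq_zero_iff_ae_notMem.mp hMvol
      filter_upwards [h3] with y hy hybox
      by_contra hne
      exact hy ⟨hMsub hne, boxSet_subset hx hybox⟩
    filter_upwards [hae2] with y hyeq
    rw [hyeq]
  rw [eLpNorm_congr_ae hZae, eLpNorm_congr_ae hae]
  -- main estimate, for the measurable function g'
  set G : (Fin k → ℝ) → ℝ≥0∞ := fun y => (‖g' y‖₊ : ℝ≥0∞) with hGdef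
  have hG : Measurable G := hmg'.nnnorm.coe_nnreal_ennreal
  have step1 : ∀ᵐ x ∂(muBeta β), (‖(∏ j, x j ^ (-(2*β j) - 1)) *
      ∫ y in boxSet x, g' y * ∏ j, y j ^ (2*β j)‖₊ : ℝ≥0∞)
      ≤ ∫⁻ y, KK β x y * G y ∂(muBeta β) := by
    filter_upwards [muBeta_ae_pos β] with x hx
    have ha : (0:ℝ) ≤ ∏ j, x j ^ (-(2*β j) - 1) :=
      Finset.prod_nonneg fun j _ => Real.rpow_nonneg (hx j).le _
    have hrhs : ∫⁻ y, KK β x y * G y ∂(muBeta β)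
        = ENNReal.ofReal (∏ j, x j ^ (-(2*β j) - 1)) *
          ∫⁻ y in boxSet x, G y * wB β y ∂volume := by
      calc ∫⁻ y, KK β x y * G y ∂(muBeta β)
          = ∫⁻ y, (boxSet x).indicator
              (fun y => ENNReal.ofReal (∏ j, x j ^ (-(2*β j) - 1)) * G y) y ∂(muBeta β) := by
            apply lintegral_congr fun y => ?_
            rw [KK_eq_snd]
            by_cases h : y ∈ boxSet x
            · rw [indicator_of_mem h, indicator_of_mem h]
            · rw [indicator_of_notMem h, indicator_of_notMem h, zero_mul]
        _ = ∫⁻ y in boxSet x,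
              ENNReal.ofReal (∏ j, x j ^ (-(2*β j) - 1)) * G y ∂(muBeta β) :=
            lintegral_indicator (measurableSet_boxSet x) _
        _ = ENNReal.ofReal (∏ j, x j ^ (-(2*β j) - 1)) *
              ∫⁻ y in boxSet x, G y ∂(muBeta β) :=
            lintegral_const_mul' _ _ ENNReal.ofReal_ne_top
        _ = ENNReal.ofReal (∏ j, x j ^ (-(2*β j) - 1)) *
              ∫⁻ y in boxSet x, G y * wB β y ∂volume := by
            congr 1
            rw [restrict_muBeta_box β hx,
              lintegral_withDensity_eq_lintegral_mul _ (measurable_wB β) hG]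
            exact lintegral_congr fun y => by rw [Pi.mul_apply, mul_comm]
    rw [hrhs]
    calc (‖(∏ j, x j ^ (-(2*β j) - 1)) *
        ∫ y in boxSet x, g' y * ∏ j, y j ^ (2*β j)‖₊ : ℝ≥0∞)
        = (‖∏ j, x j ^ (-(2*β j) - 1)‖₊ : ℝ≥0∞) *
          (‖∫ y in boxSet x, g' y * ∏ j, y j ^ (2*β j)‖₊ : ℝ≥0∞) := by
          rw [nnnorm_mul, ENNReal.coe_mul]
      _ ≤ ENNReal.ofReal (∏ j, x j ^ (-(2*β j) - 1)) *
          ∫⁻ y in boxSet x, (‖g' y * ∏ j, y j ^ (2*β j)‖₊ : ℝ≥0∞) ∂volume := by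
          rw [show (‖∏ j, x j ^ (-(2*β j) - 1)‖₊ : ℝ≥0∞) = ‖∏ j, x j ^ (-(2*β j) - 1)‖ₑ from rfl,
            Real.enorm_eq_ofReal ha]
          exact mul_le_mul_right (enorm_integral_le_lintegral_enorm _) _
      _ = ENNReal.ofReal (∏ j, x j ^ (-(2*β j) - 1)) *
          ∫⁻ y in boxSet x, G y * wB β y ∂volume := by
          congr 1
          apply setLIntegral_congr_fun (measurableSet_boxSet x)
          intro y hyb
          have hypos : ∀ j, 0 < y j := fun j => boxSet_subset hx hyb j
          beta_reduce
          rw [nnnorm_mul, ENNReal.coe_mul,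
            show (‖∏ j, y j ^ (2 * β j)‖₊ : ℝ≥0∞) = ‖∏ j, y j ^ (2 * β j)‖ₑ from rfl,
            Real.enorm_eq_ofReal (Finset.prod_nonneg fun j _ =>
              Real.rpow_nonneg (hypos j).le _)]
          rfl
  have step2 : ∀ᵐ x ∂(muBeta β), (∫⁻ y, KK β x y * G y ∂(muBeta β)) ^ pr
      ≤ C1 ^ (pr - 1) * ∫⁻ y, KK β x y * G y ^ pr ∂(muBeta β) := by
    filter_upwards [muBeta_ae_pos β] with x hx
    have hsec : AEMeasurable (fun y => KK β x y) (muBeta β) :=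
      ((measurable_KK β).comp measurable_prodMk_left).aemeasurable
    exact hoelder_step hsec hG.aemeasurable hpr1 (le_of_eq (lint_K_snd β hx))
  have step3 : ∫⁻ x, ∫⁻ y, KK β x y * G y ^ pr ∂(muBeta β) ∂(muBeta β)
      = C2 * ∫⁻ y, G y ^ pr ∂(muBeta β) := by
    have hGpr : Measurable fun y => G y ^ pr := hG.pow_const _
    have hunc : AEMeasurable
        (fun z : (Fin k → ℝ) × (Fin k → ℝ) => KK β z.1 z.2 * G z.2 ^ pr)
        ((muBeta β).prod (muBeta β)) :=
      ((measurable_KK β).mul (hGpr.comp measurable_snd)).aemeasurable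
    rw [lintegral_lintegral_swap hunc]
    have hinner : ∀ᵐ y ∂(muBeta β),
        ∫⁻ x, KK β x y * G y ^ pr ∂(muBeta β) = C2 * G y ^ pr := by
      filter_upwards [muBeta_ae_pos β] with y hy
      have hsec : AEMeasurable (fun x => KK β x y) (muBeta β) :=
        ((measurable_KK β).comp (measurable_id.prodMk measurable_const)).aemeasurable
      rw [lintegral_mul_const'' _ hsec, lint_K_fst β hy]
    rw [lintegral_congr_ae hinner, lintegral_const_mul' _ _ hC2]
  calc eLpNorm (fun x => (∏ j, x j ^ (-(2*β j) - 1)) *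
        ∫ y in boxSet x, g' y * ∏ j, y j ^ (2*β j)) p (muBeta β)
      = (∫⁻ x, (‖(∏ j, x j ^ (-(2*β j) - 1)) *
          ∫ y in boxSet x, g' y * ∏ j, y j ^ (2*β j)‖₊ : ℝ≥0∞) ^ pr ∂(muBeta β)) ^ (1/pr) :=
        eLpNorm_eq_lintegral_rpow_enorm_toReal hp0 hp'
    _ ≤ (∫⁻ x, C1 ^ (pr - 1) * ∫⁻ y, KK β x y * G y ^ pr ∂(muBeta β) ∂(muBeta β)) ^ (1/pr) := by
        apply ENNReal.rpow_le_rpow _ (one_div_nonneg.mpr hprpos.le)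
        apply lintegral_mono_ae
        filter_upwards [step1, step2] with x h1 h2
        exact le_trans (ENNReal.rpow_le_rpow h1 hprpos.le) h2
    _ = (C1 ^ (pr - 1) * (C2 * ∫⁻ y, G y ^ pr ∂(muBeta β))) ^ (1/pr) := by
        rw [lintegral_const_mul' _ _ hC1pow, step3]
    _ = D * (∫⁻ y, G y ^ pr ∂(muBeta β)) ^ (1/pr) := by
        rw [← mul_assoc, ENNReal.mul_rpow_of_nonneg _ _ (one_div_nonneg.mpr hprpos.le)]
    _ = D * eLpNorm g' p (muBeta β) := by
        rw [eLpNorm_eq_lintegral_rpow_enorm_toReal hp0 hp']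
        rfl
    _ ≤ ENNReal.ofReal (D.toReal + 1) * eLpNorm g' p (muBeta β) :=
        mul_le_mul_left hDC _
end

section
/- Let k ≥ 1 and let β_1, …, β_k > -1/2. Define H(g)(x) = ( ∑_{j=1}^k x_j^2 )^{-∑_{j=1}^k (β_j + 1/2)} ∫_0^{x_1/2} ⋯ ∫_0^{x_k/2} g(y) ∏_{j=1}^k y_j^{2β_j} dy, x ∈ (0,∞)^k. Then H is of weak type (1,1) with respect to μ_β: there is C > 0 such that for all γ > 0 and all g ∈ L^1(μ_β), μ_β({ x ∈ (0,∞)^k : |H(g)(x)| > γ }) ≤ (C/γ) ‖g‖_{L^1(μ_β)}. -/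
open Real MeasureTheory Set
open scoped ENNReal

/-- The Hardy-type operator
`H g (x) = (∑ x_j²)^{-∑(β_j+1/2)} ∫_0^{x_1/2} ⋯ ∫_0^{x_k/2} g(y) ∏ y_j^{2β_j} dy`. -/
noncomputable def Hop (k : ℕ) (β : Fin k → ℝ)
    (g : (Fin k → ℝ) → ℝ) (x : Fin k → ℝ) : ℝ :=
  (∑ j, x j ^ 2) ^ (-(∑ j, (β j + 1/2))) *
    ∫ y in {y : Fin k → ℝ | ∀ j, 0 < y j ∧ y j < x j / 2}, g y * ∏ j, y j ^ (2 * β j)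

private lemma oneDim_integrable {b : ℝ} (hb : -(1:ℝ) < 2*b) {a : ℝ} (ha : 0 < a) :
    IntegrableOn (fun t : ℝ => t ^ (2*b)) (Ioo 0 a) volume := by
  have h := intervalIntegral.intervalIntegrable_rpow' (a := 0) (b := a) hb
  exact ((intervalIntegrable_iff_integrableOn_Ioc_of_le ha.le).mp h).mono_set
    Ioo_subset_Ioc_self

private lemma oneDim_integral {b : ℝ} (hb : -(1:ℝ) < 2*b) {a : ℝ} (ha : 0 < a) :
    ∫ t in Ioo (0:ℝ) a, t ^ (2*b) = a ^ (2*b+1) / (2*b+1) := by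
  rw [← integral_Ioc_eq_integral_Ioo, ← intervalIntegral.integral_of_le ha.le,
    integral_rpow (Or.inl hb), Real.zero_rpow (by linarith : 2*b+1 ≠ 0)]
  ring_nf

private lemma posSet_measurable {k : ℕ} :
    MeasurableSet {x : Fin k → ℝ | ∀ j, 0 < x j} := by
  have : {x : Fin k → ℝ | ∀ j, 0 < x j} = Set.pi Set.univ fun _ => Ioi (0:ℝ) := by
    ext y; simp [Set.mem_pi]
  rw [this]; exact MeasurableSet.pi countable_univ fun _ _ => measurableSet_Ioi

private lemma box_measure {k : ℕ} (β : Fin k → ℝ) (hβ : ∀ j, -1/2 < β j) {a : ℝ} (ha : 0 < a) :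
    muBeta β (Set.pi Set.univ fun _ => Ioo 0 a) =
      ENNReal.ofReal (∏ j, a ^ (2*β j + 1) / (2*β j + 1)) := by
  have hb : ∀ j : Fin k, -(1:ℝ) < 2 * β j := fun j => by have := hβ j; linarith
  set B : Set (Fin k → ℝ) := Set.pi Set.univ fun _ => Ioo 0 a with hB
  have hBmeas : MeasurableSet B := MeasurableSet.pi countable_univ fun _ _ => measurableSet_Ioo
  have hBpos : B ⊆ {x : Fin k → ℝ | ∀ j, 0 < x j} := by
    intro y hy j
    exact (hy j (mem_univ j)).1
  set f : Fin k → ℝ → ℝ := fun j => (Ioo (0:ℝ) a).indicator (fun t => t ^ (2 * β j)) with hf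
  have hfint : ∀ j, Integrable (f j) := by
    intro j
    exact (oneDim_integrable (hb j) ha).integrable_indicator measurableSet_Ioo
  have hind : ∀ y : Fin k → ℝ,
      B.indicator (fun y : Fin k → ℝ => ∏ j, y j ^ (2 * β j)) y = ∏ j, f j (y j) := by
    intro y
    by_cases hy : y ∈ B
    · rw [Set.indicator_of_mem hy]
      refine Finset.prod_congr rfl fun j _ => ?_
      rw [hf]
      simp only
      rw [Set.indicator_of_mem (hy j (mem_univ j))]
    · rw [Set.indicator_of_notMem hy]
      have hy' : ∃ j, y j ∉ Ioo (0:ℝ) a := by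
        by_contra h
        push_neg at h
        exact hy fun j _ => h j
      obtain ⟨j, hj⟩ := hy'
      refine (Finset.prod_eq_zero (Finset.mem_univ j) ?_).symm
      rw [hf]
      simp only
      rw [Set.indicator_of_notMem hj]
  have hFnn : 0 ≤ᵐ[(volume : Measure (Fin k → ℝ))] fun y => ∏ j, f j (y j) := by
    refine Filter.Eventually.of_forall fun y => ?_
    refine Finset.prod_nonneg fun j _ => ?_
    rw [hf]
    simp only
    exact Set.indicator_nonneg (fun t ht => Real.rpow_nonneg ht.1.le _) _
  have hFint : Integrable (fun y : Fin k → ℝ => ∏ j, f j (y j)) := by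
    exact Integrable.fintype_prod (𝕜 := ℝ) hfint
  have step : muBeta β B = ∫⁻ y in B, ENNReal.ofReal (∏ j, y j ^ (2 * β j)) ∂volume := by
    rw [muBeta, withDensity_apply _ hBmeas, Measure.restrict_restrict hBmeas,
      Set.inter_eq_self_of_subset_left hBpos]
  rw [step, ← lintegral_indicator hBmeas]
  have : (fun y => B.indicator (fun y : Fin k → ℝ => ENNReal.ofReal (∏ j, y j ^ (2 * β j))) y)
      = fun y => ENNReal.ofReal (∏ j, f j (y j)) := by
    funext y
    rw [← hind y]
    by_cases hy : y ∈ B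
    · rw [Set.indicator_of_mem hy, Set.indicator_of_mem hy]
    · rw [Set.indicator_of_notMem hy, Set.indicator_of_notMem hy, ENNReal.ofReal_zero]
  rw [this, ← ofReal_integral_eq_lintegral_ofReal hFint hFnn,
    MeasureTheory.integral_fintype_prod_volume_eq_prod (ι := Fin k) (E := fun _ => ℝ) f]
  congr 1
  refine Finset.prod_congr rfl fun j _ => ?_
  rw [hf]
  simp only
  rw [MeasureTheory.integral_indicator measurableSet_Ioo, oneDim_integral (hb j) ha]

private lemma keyA {k : ℕ} (β : Fin k → ℝ) (g : (Fin k → ℝ) → ℝ) (x : Fin k → ℝ) :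
    ∫⁻ y in {y : Fin k → ℝ | ∀ j, 0 < y j ∧ y j < x j / 2},
      (‖g y * ∏ j, y j ^ (2 * β j)‖₊ : ℝ≥0∞) ∂volume ≤ eLpNorm g 1 (muBeta β) := by
  set Pos : Set (Fin k → ℝ) := {x | ∀ j, 0 < x j} with hPos
  set E : Set (Fin k → ℝ) := {y | ∀ j, 0 < y j ∧ y j < x j / 2} with hEdef
  have hE : E = Set.pi Set.univ fun j => Ioo 0 (x j / 2) := by
    ext y; simp [hEdef, Set.mem_pi]
  have hEmeas : MeasurableSet E := by
    rw [hE]; exact MeasurableSet.pi countable_univ fun _ _ => measurableSet_Ioo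
  have hEpos : E ⊆ Pos := fun y hy j => (hy j).1
  have hdens : Measurable fun y : Fin k → ℝ => ENNReal.ofReal (∏ j, y j ^ (2 * β j)) := by
    fun_prop
  have hrestr : ((volume : Measure (Fin k → ℝ)).restrict Pos).restrict E
      = (volume : Measure (Fin k → ℝ)).restrict E := by
    rw [Measure.restrict_restrict hEmeas, Set.inter_eq_self_of_subset_left hEpos]
  calc
    ∫⁻ y in E, (‖g y * ∏ j, y j ^ (2 * β j)‖₊ : ℝ≥0∞) ∂volume
        = ∫⁻ y in E, ENNReal.ofReal (∏ j, y j ^ (2 * β j)) * (‖g y‖₊ : ℝ≥0∞) ∂volume := by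
          refine setLIntegral_congr_fun hEmeas (fun y hy => ?_)
          have hP : 0 ≤ ∏ j, y j ^ (2 * β j) :=
            Finset.prod_nonneg fun j _ => Real.rpow_nonneg ((hy j).1.le) _
          rw [nnnorm_mul, ENNReal.coe_mul, ← enorm_eq_nnnorm (∏ j, y j ^ (2 * β j)), ← Real.enorm_eq_ofReal hP, mul_comm]
    _ = ∫⁻ y in E, ENNReal.ofReal (∏ j, y j ^ (2 * β j)) * (‖g y‖₊ : ℝ≥0∞)
          ∂((volume : Measure (Fin k → ℝ)).restrict Pos) := by rw [hrestr]
    _ ≤ ∫⁻ y, ENNReal.ofReal (∏ j, y j ^ (2 * β j)) * (‖g y‖₊ : ℝ≥0∞)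
          ∂((volume : Measure (Fin k → ℝ)).restrict Pos) := setLIntegral_le_lintegral _ _
    _ = ∫⁻ y, (‖g y‖₊ : ℝ≥0∞) ∂(muBeta β) := by
          rw [muBeta, lintegral_withDensity_eq_lintegral_mul_non_measurable _ hdens
            (Filter.Eventually.of_forall fun y => ENNReal.ofReal_lt_top)]
          rfl
    _ = eLpNorm g 1 (muBeta β) := (eLpNorm_one_eq_lintegral_enorm (f := g) (μ := muBeta β)).symm

/-- For `β_j > -1/2`, `H` is of weak type `(1,1)` with respect to `μ_β`. -/
theorem Hop_weak_type (k : ℕ) (hk : 1 ≤ k) (β : Fin k → ℝ) (hβ : ∀ j, -1/2 < β j) :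
    ∃ C > (0 : ℝ), ∀ γ : ℝ, 0 < γ → ∀ g : (Fin k → ℝ) → ℝ, MemLp g 1 (muBeta β) →
      muBeta β {x | γ < |Hop k β g x|} ≤
        ENNReal.ofReal (C / γ) * eLpNorm g 1 (muBeta β) := by
  have hne : Nonempty (Fin k) := ⟨⟨0, hk⟩⟩
  have hs : 0 < ∑ j, (β j + 1/2) :=
    Finset.sum_pos (fun j _ => by have := hβ j; linarith) Finset.univ_nonempty
  set s : ℝ := ∑ j, (β j + 1/2) with hsdef
  refine ⟨∏ j, (2 * β j + 1)⁻¹, Finset.prod_pos fun j _ => by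
    have := hβ j; exact inv_pos.2 (by linarith), ?_⟩
  set C : ℝ := ∏ j, (2 * β j + 1)⁻¹ with hCdef
  have hC : 0 < C := Finset.prod_pos fun j _ => by have := hβ j; exact inv_pos.2 (by linarith)
  intro γ hγ g hg
  have hMlt : eLpNorm g 1 (muBeta β) < ⊤ := hg.eLpNorm_lt_top
  set M : ℝ := (eLpNorm g 1 (muBeta β)).toReal with hMdef
  have hM0 : 0 ≤ M := ENNReal.toReal_nonneg
  -- pointwise bound on Hop
  have hHop : ∀ x, |Hop k β g x| ≤ |(∑ j, x j ^ 2) ^ (-s)| * M := by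
    intro x
    rw [Hop, abs_mul]
    refine mul_le_mul_of_nonneg_left ?_ (abs_nonneg _)
    calc |∫ y in {y : Fin k → ℝ | ∀ j, 0 < y j ∧ y j < x j / 2},
            g y * ∏ j, y j ^ (2 * β j)|
        ≤ (∫⁻ y in {y : Fin k → ℝ | ∀ j, 0 < y j ∧ y j < x j / 2},
            (‖g y * ∏ j, y j ^ (2 * β j)‖₊ : ℝ≥0∞) ∂volume).toReal := by
          have h1 := MeasureTheory.norm_integral_le_lintegral_norm
            (μ := (volume : Measure (Fin k → ℝ)).restrict
              {y : Fin k → ℝ | ∀ j, 0 < y j ∧ y j < x j / 2})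
            (fun y => g y * ∏ j, y j ^ (2 * β j))
          simp only [Real.norm_eq_abs] at h1
          simpa only [← enorm_eq_nnnorm, Real.enorm_eq_ofReal_abs] using h1
      _ ≤ M := ENNReal.toReal_mono hMlt.ne (keyA β g x)
  by_cases hMz : eLpNorm g 1 (muBeta β) = 0
  · have hM' : M = 0 := by rw [hMdef, hMz]; simp
    have hempty : {x | γ < |Hop k β g x|} = (∅ : Set (Fin k → ℝ)) := by
      ext x
      simp only [mem_setOf_eq, mem_empty_iff_false, iff_false, not_lt]
      calc |Hop k β g x| ≤ |(∑ j, x j ^ 2) ^ (-s)| * M := hHop x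
        _ = 0 := by rw [hM']; ring
        _ ≤ γ := hγ.le
    rw [hempty]
    simp
  · have hMpos : 0 < M := ENNReal.toReal_pos hMz hMlt.ne
    set r : ℝ := (M / γ) ^ s⁻¹ with hrdef
    have hr : 0 < r := Real.rpow_pos_of_pos (div_pos hMpos hγ) _
    set a : ℝ := Real.sqrt r with hadef
    have ha : 0 < a := Real.sqrt_pos.2 hr
    -- superlevel set is inside the box (up to the complement of the positive orthant)
    have hsub : {x | γ < |Hop k β g x|} ⊆
        (Set.pi Set.univ fun _ => Ioo 0 a) ∪ {x : Fin k → ℝ | ∀ j, 0 < x j}ᶜ := by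
      intro x hx
      by_cases hxp : x ∈ {x : Fin k → ℝ | ∀ j, 0 < x j}
      · left
        have hb : 0 < ∑ j, x j ^ 2 := by
          refine Finset.sum_pos' (fun j _ => sq_nonneg _) ?_
          obtain ⟨j⟩ := hne
          exact ⟨j, Finset.mem_univ j, by have := hxp j; positivity⟩
        have h1 : γ < (∑ j, x j ^ 2) ^ (-s) * M := by
          have := (hx : γ < |Hop k β g x|).trans_le (hHop x)
          rwa [abs_of_pos (Real.rpow_pos_of_pos hb _)] at this
        have h2 : (∑ j, x j ^ 2) ^ s < M / γ := by
          rw [Real.rpow_neg hb.le] at h1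
          have hbs : 0 < (∑ j, x j ^ 2) ^ s := Real.rpow_pos_of_pos hb _
          have h2' := mul_lt_mul_of_pos_left h1 hbs
          rw [← mul_assoc, mul_inv_cancel₀ hbs.ne', one_mul] at h2'
          rw [lt_div_iff₀ hγ]
          exact h2'
        have h3 : (∑ j, x j ^ 2) < r := by
          have := Real.rpow_lt_rpow (Real.rpow_nonneg hb.le s) h2 (inv_pos.2 hs)
          rwa [← Real.rpow_mul hb.le, mul_inv_cancel₀ hs.ne', Real.rpow_one] at this
        rw [Set.mem_univ_pi]
        intro j
        refine ⟨hxp j, ?_⟩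
        refine (Real.lt_sqrt (hxp j).le).2 ?_
        calc x j ^ 2 ≤ ∑ i, x i ^ 2 :=
              Finset.single_le_sum (fun i _ => sq_nonneg (x i)) (Finset.mem_univ j)
          _ < r := h3
      · exact Set.mem_union_right _ hxp
    -- measure of the complement of the positive orthant is zero
    have hcompl : muBeta β {x : Fin k → ℝ | ∀ j, 0 < x j}ᶜ = 0 := by
      rw [muBeta, withDensity_apply _ posSet_measurable.compl,
        Measure.restrict_restrict posSet_measurable.compl, Set.compl_inter_self,
        Measure.restrict_empty, lintegral_zero_measure]
    -- final computation
    have hprod : (∏ j, a ^ (2*β j + 1) / (2*β j + 1)) = C / γ * M := by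
      have h1 : (∏ j, a ^ (2*β j + 1) / (2*β j + 1))
          = (∏ j, a ^ (2*β j + 1)) * C := by
        rw [hCdef, ← Finset.prod_mul_distrib]
        exact Finset.prod_congr rfl fun j _ => by rw [div_eq_mul_inv]
      have h2 : (∏ j, a ^ (2*β j + 1)) = a ^ (2*s) := by
        rw [← Real.rpow_sum_of_pos ha]
        congr 1
        rw [hsdef, Finset.mul_sum]
        exact Finset.sum_congr rfl fun j _ => by ring
      have h3 : a ^ (2*s) = M / γ := by
        rw [hadef, Real.sqrt_eq_rpow, ← Real.rpow_mul hr.le,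
          show (1/(2:ℝ)) * (2*s) = s by ring, hrdef, ← Real.rpow_mul
          (div_nonneg hMpos.le hγ.le), inv_mul_cancel₀ hs.ne', Real.rpow_one]
      rw [h1, h2, h3]
      ring
    calc muBeta β {x | γ < |Hop k β g x|}
        ≤ muBeta β ((Set.pi Set.univ fun _ => Ioo 0 a)
            ∪ {x : Fin k → ℝ | ∀ j, 0 < x j}ᶜ) := measure_mono hsub
      _ ≤ muBeta β (Set.pi Set.univ fun _ => Ioo 0 a)
            + muBeta β {x : Fin k → ℝ | ∀ j, 0 < x j}ᶜ := measure_union_le _ _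
      _ = ENNReal.ofReal (∏ j, a ^ (2*β j + 1) / (2*β j + 1)) := by
            rw [hcompl, add_zero, box_measure β hβ ha]
      _ = ENNReal.ofReal (C / γ) * eLpNorm g 1 (muBeta β) := by
            rw [hprod, ENNReal.ofReal_mul (div_nonneg hC.le hγ.le), hMdef,
              ENNReal.ofReal_toReal hMlt.ne]
end
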